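/- For 1 ≤ i ≤ m+n, the isomorphism ρ_{n|m} ∘ ω_{n|m} : Y(gl_{n|m}) → Y(gl_{m|n}) maps the quasideterminant d_i(v) of Y(gl_{n|m}) to the inverse d_{m+n+1−i}(v)^{−1} of the quasideterminant d_{m+n+1−i}(v) of Y(gl_{m|n}). -/

import Mathlib

/-!
Common setup: the super Yangian `Y(gl_{m|n})`, defined as the quotient of the free
algebra on generators `t_{ij}^{(r)}` (here `(i, j, r) : Fin (m+n) × Fin (m+n) × ℕ`
encodes `t_{ij}^{(r+1)}`) by the defining relations, obtained by equating the
coefficients of `u^{-r} v^{-s}` in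
`(u-v)[t_{ij}(u), t_{kl}(v)]
   = (-1)^{ī j̄ + ī k̄ + j̄ k̄} (t_{kj}(u) t_{il}(v) - t_{kj}(v) t_{il}(u))`.
Power series in `u^{-1}` are modelled by `PowerSeries`, whose variable stands
for `u^{-1}`.
-/

noncomputable section

namespace SuperYangian

open scoped BigOperators

/-- Generator index: `(i, j, r)` encodes the generator `t_{ij}^{(r+1)}`. -/
abbrev Gen (N : ℕ) := Fin N × Fin N × ℕ

/-- The free algebra on the generators. -/
abbrev FA (N : ℕ) := FreeAlgebra ℂ (Gen N)

/-- Parity of an index: `0` for the first `m` indices, `1` for the remaining ones. -/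
def par (m : ℕ) {N : ℕ} (i : Fin N) : ℕ := if (i : ℕ) < m then 0 else 1

/-- The sign `(-1)^{ī j̄ + ī k̄ + j̄ k̄}`. -/
def sgn3 (m : ℕ) {N : ℕ} (i j k : Fin N) : ℤ :=
  (-1) ^ (par m i * par m j + par m i * par m k + par m j * par m k)

/-- The series `t_{ij}(u) = δ_{ij} + Σ_{r ≥ 1} t_{ij}^{(r)} u^{-r}` over the free algebra. -/
def tF {N : ℕ} (i j : Fin N) : PowerSeries (FA N) :=
  PowerSeries.mk fun r =>
    if r = 0 then (if i = j then 1 else 0) else FreeAlgebra.ι ℂ (i, j, r - 1)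

/-- The element of the free algebra expressing, at bidegree `u^{-r} v^{-s}`, the defining
relation `(u-v)[t_{ij}(u), t_{kl}(v)]
  = (-1)^{ī j̄ + ī k̄ + j̄ k̄}(t_{kj}(u) t_{il}(v) - t_{kj}(v) t_{il}(u))`. -/
def relElt (m : ℕ) {N : ℕ} (i j k l : Fin N) (r s : ℕ) : FA N :=
  ((PowerSeries.coeff (r+1) (tF i j)) * (PowerSeries.coeff s (tF k l))
      - (PowerSeries.coeff s (tF k l)) * (PowerSeries.coeff (r+1) (tF i j)))
  - ((PowerSeries.coeff r (tF i j)) * (PowerSeries.coeff (s+1) (tF k l))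
      - (PowerSeries.coeff (s+1) (tF k l)) * (PowerSeries.coeff r (tF i j)))
  - sgn3 m i j k •
      ((PowerSeries.coeff r (tF k j)) * (PowerSeries.coeff s (tF i l))
        - (PowerSeries.coeff s (tF k j)) * (PowerSeries.coeff r (tF i l)))

/-- The defining relations of `Y(gl_{m|n})`. -/
inductive YRel (m n : ℕ) : FA (m+n) → FA (m+n) → Prop
  | rel (i j k l : Fin (m+n)) (r s : ℕ) : YRel m n (relElt m i j k l r s) 0

/-- The super Yangian `Y(gl_{m|n})`. -/
abbrev Yangian (m n : ℕ) := RingQuot (YRel m n)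

/-- The canonical projection from the free algebra onto the Yangian. -/
def proj (m n : ℕ) : FA (m+n) →ₐ[ℂ] Yangian m n := RingQuot.mkAlgHom ℂ (YRel m n)

/-- The generator `t_{ij}^{(r+1)}` of `Y(gl_{m|n})` (`tGen i j r` is `t_{ij}^{(r+1)}`,
so that as `r` ranges over `ℕ` we get exactly the generators `t_{ij}^{(s)}`, `s ≥ 1`). -/
def tGen {m n : ℕ} (i j : Fin (m+n)) (r : ℕ) : Yangian m n :=
  proj m n (FreeAlgebra.ι ℂ (i, j, r))

/-- The generating series `t_{ij}(u) ∈ Y(gl_{m|n})[[u^{-1}]]`. -/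
def t {m n : ℕ} (i j : Fin (m+n)) : PowerSeries (Yangian m n) :=
  PowerSeries.mk fun r => if r = 0 then (if i = j then 1 else 0) else tGen i j (r - 1)

/-- The matrix `T(u)`. -/
def T (m n : ℕ) : Matrix (Fin (m+n)) (Fin (m+n)) (PowerSeries (Yangian m n)) :=
  Matrix.of fun i j => t i j

/-- The inverse matrix `T(u)^{-1}` (`T(u)` is a unit of the matrix ring, since its
constant term is the identity matrix, so `Ring.inverse` produces the genuine inverse). -/
def T' (m n : ℕ) : Matrix (Fin (m+n)) (Fin (m+n)) (PowerSeries (Yangian m n)) :=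
  Ring.inverse (T m n)

/-- The series `t'_{ij}(u)`: the `(i,j)` entry of `T(u)^{-1}`. -/
def t' {m n : ℕ} (i j : Fin (m+n)) : PowerSeries (Yangian m n) := T' m n i j

/-- `g(u - c)`: substitute `u - c` for `u` and expand in powers of `u^{-1}`, using
`(u-c)^{-r} = Σ_{s ≥ 0} C(r+s-1, s) c^s u^{-r-s}`. -/
def shift {A : Type*} [Ring A] (c : ℤ) (g : PowerSeries A) : PowerSeries A :=
  PowerSeries.mk fun p => ∑ r ∈ Finset.range (p+1),
    (((p-1).choose (p-r) : ℤ) * c ^ (p-r)) • PowerSeries.coeff (R := A) r g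

/-- `g(-u)`: replace `u^{-r}` by `(-1)^r u^{-r}`. -/
def negu {A : Type*} [Ring A] (g : PowerSeries A) : PowerSeries A :=
  PowerSeries.mk fun p => ((-1 : ℤ) ^ p) • PowerSeries.coeff (R := A) p g

/-- The quantum determinant type series
`C_m(u) = Σ_{τ ∈ S_m} sgn τ · t_{τ(1)1}(u) t_{τ(2)2}(u-1) ⋯ t_{τ(m)m}(u-m+1)`
of the `gl_m` block of `Y(gl_{m|n})`. -/
def Cm (m n : ℕ) : PowerSeries (Yangian m n) :=
  ∑ τ : Equiv.Perm (Fin m), (Equiv.Perm.sign τ : ℤ) •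
    ((List.finRange m).map fun (a : Fin m) =>
      shift ((a : ℕ) : ℤ)
        (t (Fin.castLE (Nat.le_add_right m n) (τ a))
           (Fin.castLE (Nat.le_add_right m n) a))).prod

/-- The second factor of the quantum Berezinian:
`Σ_{σ ∈ S_n} sgn σ · t'_{m+1, m+σ(1)}(u-m+1) ⋯ t'_{m+n, m+σ(n)}(u-m+n)`. -/
def berSecond (m n : ℕ) : PowerSeries (Yangian m n) :=
  ∑ σ : Equiv.Perm (Fin n), (Equiv.Perm.sign σ : ℤ) •
    ((List.finRange n).map fun (b : Fin n) =>
      shift ((m : ℤ) - 1 - (b : ℕ))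
        (t' (Fin.natAdd m b) (Fin.natAdd m (σ b)))).prod

/-- The quantum Berezinian `b_{m|n}(u)`. -/
def ber (m n : ℕ) : PowerSeries (Yangian m n) := Cm m n * berSecond m n

/-- Gauss decomposition data: `D` is diagonal (with invertible diagonal entries, i.e.
constant term `1`), `E` upper unitriangular, `F` lower unitriangular, and
`T(u) = F(u) D(u) E(u)`. -/
def IsGauss (m n : ℕ)
    (F D E : Matrix (Fin (m+n)) (Fin (m+n)) (PowerSeries (Yangian m n))) : Prop :=
  (∀ i j, i ≠ j → D i j = 0) ∧
  (∀ i, PowerSeries.constantCoeff (D i i) = 1) ∧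
  (∀ i, E i i = 1) ∧ (∀ i j : Fin (m+n), (j : ℕ) < (i : ℕ) → E i j = 0) ∧
  (∀ i, F i i = 1) ∧ (∀ i j : Fin (m+n), (i : ℕ) < (j : ℕ) → F i j = 0) ∧
  T m n = F * D * E

/-- The top-left `(i+1) × (i+1)` submatrix of `T(u)` (`0`-indexed `i`). -/
def subT (m n : ℕ) (i : Fin (m+n)) :
    Matrix (Fin ((i : ℕ)+1)) (Fin ((i : ℕ)+1)) (PowerSeries (Yangian m n)) :=
  Matrix.of fun a b => t (Fin.castLE i.isLt a) (Fin.castLE i.isLt b)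

/-- The quasideterminant `d_{i+1}(u)` (`0`-indexed: `dQ m n i` is the `(i+1, i+1)`
quasideterminant of the top-left `(i+1) × (i+1)` submatrix of `T(u)`). -/
def dQ (m n : ℕ) (i : Fin (m+n)) : PowerSeries (Yangian m n) :=
  Ring.inverse (Ring.inverse (subT m n i) (Fin.last (i : ℕ)) (Fin.last (i : ℕ)))

/-- Formal series in the two variables `u^{-1}`, `v^{-1}` (variable `0` is `u^{-1}`,
variable `1` is `v^{-1}`). -/
abbrev Bi (A : Type*) := MvPowerSeries (Fin 2) A

/-- Embed a series in `u^{-1}` into the two-variable series ring. -/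
def inU {A : Type*} [Semiring A] (g : PowerSeries A) : Bi A :=
  fun d => if d 1 = 0 then PowerSeries.coeff (R := A) (d 0) g else 0

/-- Embed a series in `v^{-1}` into the two-variable series ring. -/
def inV {A : Type*} [Semiring A] (g : PowerSeries A) : Bi A :=
  fun d => if d 0 = 0 then PowerSeries.coeff (R := A) (d 1) g else 0

/-- The coefficient of `u^{-r} v^{-s}`. -/
def bc {A : Type*} [Semiring A] (r s : ℕ) (g : Bi A) : A :=
  MvPowerSeries.coeff (R := A) (Finsupp.single 0 r + Finsupp.single 1 s) g

/-- The characterizing property of the automorphism `ω_{m|n}`: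
`ω(t_{ij}(u)) = t'_{ij}(-u)`, i.e. `T(u) ↦ T(-u)^{-1}` coefficientwise. -/
def omegaProp (m n : ℕ) (ω : Yangian m n →ₐ[ℂ] Yangian m n) : Prop :=
  ∀ i j : Fin (m+n), PowerSeries.map ω.toRingHom (t i j) = negu (t' i j)

/-- The index map `i ↦ m+n+1-i` (in `1`-based labelling) from the indices of
`Y(gl_{m|n})` to those of `Y(gl_{n|m})`. -/
def flipIdx {m n : ℕ} (i : Fin (m+n)) : Fin (n+m) :=
  ⟨m + n - 1 - (i : ℕ), by have := i.isLt; omega⟩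

/-- The characterizing property of the isomorphism `ρ_{m|n} : Y(gl_{m|n}) → Y(gl_{n|m})`:
`ρ(t_{ij}(u)) = t_{m+n+1-i, m+n+1-j}(-u)`. -/
def rhoProp (m n : ℕ) (ρ : Yangian m n →ₐ[ℂ] Yangian n m) : Prop :=
  ∀ i j : Fin (m+n), PowerSeries.map ρ.toRingHom (t i j) = negu (t (flipIdx i) (flipIdx j))

/-- The index map `i ↦ k + i` from indices of `Y(gl_{m|n})` to indices of
`Y(gl_{m+k|n})` (whose total size `M + n` is recorded via `M = m + k`). -/
def addIdx {m n : ℕ} (k M : ℕ) (hM : M = m + k) (i : Fin (m+n)) : Fin (M+n) :=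
  ⟨k + (i : ℕ), by have := i.isLt; omega⟩

/-- The characterizing property of the inclusion `φ_{m|n} : Y(gl_{m|n}) → Y(gl_{m+k|n})`:
`t_{ij}^{(r)} ↦ t_{k+i, k+j}^{(r)}`. -/
def phiProp (m n k M : ℕ) (hM : M = m + k) (φ : Yangian m n →ₐ[ℂ] Yangian M n) : Prop :=
  ∀ i j : Fin (m+n),
    PowerSeries.map φ.toRingHom (t i j) = t (addIdx k M hM i) (addIdx k M hM j)

/-- The `(k+1, k+1)` quasideterminant of a `(k+1) × (k+1)` matrix. -/
def qdet {R : Type*} [Ring R] {k : ℕ} (X : Matrix (Fin (k+1)) (Fin (k+1)) R) : R :=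
  Ring.inverse (Ring.inverse X (Fin.last k) (Fin.last k))

end SuperYangian

/-! ### Auxiliary material for Statement 18 -/

namespace SuperYangian

open Matrix

section RingInverseLemmas

variable {A' B' : Type*} [Ring A'] [Ring B']

theorem rh_inverse (f : A' →+* B') {x : A'} (hx : IsUnit x) :
    f (Ring.inverse x) = Ring.inverse (f x) := by
  obtain ⟨u, rfl⟩ := hx
  rw [Ring.inverse_unit]
  have hfu : IsUnit (f ↑u) := ⟨Units.map f.toMonoidHom u, rfl⟩
  obtain ⟨v, hv⟩ := hfu
  rw [← hv, Ring.inverse_unit]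
  have h1 : f ↑u⁻¹ * ↑v = 1 := by
    rw [hv, ← _root_.map_mul, Units.inv_mul, _root_.map_one]
  calc f ↑u⁻¹ = f ↑u⁻¹ * (↑v * ↑v⁻¹) := by rw [Units.mul_inv, mul_one]
    _ = ↑v⁻¹ := by rw [← mul_assoc, h1, one_mul]

theorem re_inverse (e : A' ≃+* B') (x : A') : e (Ring.inverse x) = Ring.inverse (e x) := by
  by_cases hx : IsUnit x
  · exact rh_inverse e.toRingHom hx
  · rw [Ring.inverse_non_unit _ hx, Ring.inverse_non_unit, map_zero]
    intro hcon
    have := hcon.map e.symm.toRingHom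
    simp at this
    exact hx this

theorem ring_inv_inv {x : A'} (hx : IsUnit x) : Ring.inverse (Ring.inverse x) = x := by
  obtain ⟨u, rfl⟩ := hx
  rw [Ring.inverse_unit]
  exact (Ring.inverse_unit u⁻¹).trans (by simp)

theorem isUnit_ringInverse {x : A'} (hx : IsUnit x) : IsUnit (Ring.inverse x) := by
  obtain ⟨u, rfl⟩ := hx
  rw [Ring.inverse_unit]
  exact (u⁻¹).isUnit

end RingInverseLemmas

section NeguLemmas

variable {A' B' : Type*} [Ring A'] [Ring B']

theorem negu_negu (g : PowerSeries A') : negu (negu g) = g := by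
  ext p
  simp only [negu, PowerSeries.coeff_mk, smul_smul, ← mul_pow, neg_mul_neg, one_mul, one_pow,
    one_smul]

theorem negu_map (f : A' →+* B') (g : PowerSeries A') :
    PowerSeries.map f (negu g) = negu (PowerSeries.map f g) := by
  ext p
  simp [negu, PowerSeries.coeff_map]

/-- `negu` as a ring homomorphism. -/
def neguRH (A' : Type*) [Ring A'] : PowerSeries A' →+* PowerSeries A' where
  toFun := negu
  map_one' := by
    ext p
    by_cases hp : p = 0 <;> simp [negu, PowerSeries.coeff_one, hp]
  map_mul' f g := by
    ext p
    simp only [negu, PowerSeries.coeff_mk, PowerSeries.coeff_mul, Finset.smul_sum]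
    apply Finset.sum_congr rfl
    intro x hx
    have hx' : x.1 + x.2 = p := Finset.HasAntidiagonal.mem_antidiagonal.mp hx
    rw [smul_mul_smul_comm, ← pow_add, hx']
  map_zero' := by ext p; simp [negu]
  map_add' f g := by ext p; simp [negu]

@[simp] theorem neguRH_apply (g : PowerSeries A') : neguRH A' g = negu g := rfl

end NeguLemmas

section MatrixLemmas

/-- The ring of 1×1 matrices. -/
def one1 (R : Type*) [Ring R] : Matrix (Fin 1) (Fin 1) R ≃+* R where
  toFun Z := Z 0 0
  invFun r := Matrix.of fun _ _ => r
  left_inv Z := by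
    ext a b
    fin_cases a <;> fin_cases b <;> rfl
  right_inv r := rfl
  map_add' Z W := rfl
  map_mul' Z W := by
    simp [Matrix.mul_apply, Fin.sum_univ_one]

/-- Matrices of power series vs power series of matrices. -/
def psMat (q : ℕ) (S : Type*) [Ring S] :
    PowerSeries (Matrix (Fin q) (Fin q) S) ≃+* Matrix (Fin q) (Fin q) (PowerSeries S) where
  toFun g := Matrix.of fun a b => PowerSeries.mk fun p => PowerSeries.coeff p g a b
  invFun M := PowerSeries.mk fun p => Matrix.of fun a b => PowerSeries.coeff p (M a b)
  left_inv g := by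
    ext p a b
    simp [PowerSeries.coeff_mk]
  right_inv M := by
    ext a b p
    simp [PowerSeries.coeff_mk]
  map_add' g h := by
    ext a b p
    simp [PowerSeries.coeff_mk, Matrix.add_apply]
  map_mul' g h := by
    ext a b p
    simp only [Matrix.of_apply, PowerSeries.coeff_mk, PowerSeries.coeff_mul, Matrix.mul_apply,
      Matrix.sum_apply, Finset.sum_apply, map_sum]
    exact Finset.sum_comm

/-- A matrix of power series with constant coefficient the identity is a unit. -/
theorem matrix_isUnit {q : ℕ} {S : Type*} [Ring S]
    (M : Matrix (Fin q) (Fin q) (PowerSeries S))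
    (h : ∀ a b, PowerSeries.constantCoeff (M a b)
        = (1 : Matrix (Fin q) (Fin q) S) a b) : IsUnit M := by
  have h1 : IsUnit ((psMat q S).symm M) := by
    rw [PowerSeries.isUnit_iff_constantCoeff]
    have h2 : PowerSeries.constantCoeff ((psMat q S).symm M)
        = (1 : Matrix (Fin q) (Fin q) S) := by
      ext a b
      have h3 : PowerSeries.constantCoeff ((psMat q S).symm M)
          = Matrix.of fun a b => PowerSeries.coeff 0 (M a b) := rfl
      rw [h3]
      simpa [PowerSeries.coeff_zero_eq_constantCoeff] using h a b
    rw [h2]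
    exact isUnit_one
  have := h1.map (psMat q S)
  simpa using this

theorem submatrix_ringInverse {R : Type*} [Ring R] {ι κ : Type*} [Fintype ι] [Fintype κ]
    [DecidableEq ι] [DecidableEq κ] (e : ι ≃ κ) (M : Matrix κ κ R) :
    Ring.inverse (M.submatrix e e) = (Ring.inverse M).submatrix e e := by
  have h1 : ∀ X : Matrix κ κ R, X.submatrix (e : ι → κ) (e : ι → κ)
      = (Matrix.reindexAlgEquiv ℕ R e.symm) X := by
    intro X
    rw [Matrix.reindexAlgEquiv_apply, Matrix.reindex_apply, Equiv.symm_symm]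
  rw [h1, h1]
  exact (re_inverse (Matrix.reindexAlgEquiv ℕ R e.symm).toRingEquiv M).symm

theorem isUnit_submatrix {R : Type*} [Ring R] {ι κ : Type*} [Fintype ι] [Fintype κ]
    [DecidableEq ι] [DecidableEq κ] (e : ι ≃ κ) (M : Matrix κ κ R) (hM : IsUnit M) :
    IsUnit (M.submatrix e e) := by
  have h1 : M.submatrix (e : ι → κ) (e : ι → κ) = (Matrix.reindexAlgEquiv ℕ R e.symm) M := by
    rw [Matrix.reindexAlgEquiv_apply, Matrix.reindex_apply, Equiv.symm_symm]
  rw [h1]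
  exact hM.map _

theorem mul3_apply {R : Type*} [Ring R] {ι κ : Type*} [Fintype ι]
    (Cb : Matrix κ ι R) (A : Matrix ι ι R) (B : Matrix ι κ R) (x y : κ) :
    (Cb * A * B) x y = ∑ c : ι, ∑ d : ι, Cb x c * A c d * B d y := by
  simp only [Matrix.mul_apply, Finset.sum_mul]
  exact Finset.sum_comm

end MatrixLemmas

section Core
variable {R : Type*} [Ring R] {ι κ : Type*} [Fintype ι] [Fintype κ] [DecidableEq ι] [DecidableEq κ]

set_option maxHeartbeats 1000000 in
theorem core (Am : Matrix ι ι R) (Bm : Matrix ι κ R) (Cm : Matrix κ ι R) (Dm : Matrix κ κ R)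
    (hX : IsUnit (fromBlocks Am Bm Cm Dm)) (hA : IsUnit Am) :
    IsUnit (Dm - Cm * Ring.inverse Am * Bm) ∧
      (Ring.inverse (fromBlocks Am Bm Cm Dm)).toBlocks₂₂
        = Ring.inverse (Dm - Cm * Ring.inverse Am * Bm) := by
  set A' := Ring.inverse Am with hA'
  have hAA' : Am * A' = 1 := Ring.mul_inverse_cancel _ hA
  have hA'A : A' * Am = 1 := Ring.inverse_mul_cancel _ hA
  set S := Dm - Cm * A' * Bm with hS
  set L : Matrix (ι ⊕ κ) (ι ⊕ κ) R := fromBlocks 1 0 (Cm * A') 1 with hL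
  set Li : Matrix (ι ⊕ κ) (ι ⊕ κ) R := fromBlocks 1 0 (-(Cm * A')) 1 with hLi
  set U : Matrix (ι ⊕ κ) (ι ⊕ κ) R := fromBlocks 1 (A' * Bm) 0 1 with hU
  set Ui : Matrix (ι ⊕ κ) (ι ⊕ κ) R := fromBlocks 1 (-(A' * Bm)) 0 1 with hUi
  set G : Matrix (ι ⊕ κ) (ι ⊕ κ) R := fromBlocks Am 0 0 S with hG
  have hLLi : L * Li = 1 := by
    rw [hL, hLi, fromBlocks_multiply, ← fromBlocks_one]; congr 1 <;> simp
  have hLiL : Li * L = 1 := by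
    rw [hL, hLi, fromBlocks_multiply, ← fromBlocks_one]; congr 1 <;> simp
  have hUUi : U * Ui = 1 := by
    rw [hU, hUi, fromBlocks_multiply, ← fromBlocks_one]; congr 1 <;> simp
  have hUiU : Ui * U = 1 := by
    rw [hU, hUi, fromBlocks_multiply, ← fromBlocks_one]; congr 1 <;> simp
  have e1 : Am * (A' * Bm) = Bm := by rw [← Matrix.mul_assoc, hAA', Matrix.one_mul]
  have e2 : Cm * A' * Am = Cm := by rw [Matrix.mul_assoc, hA'A, Matrix.mul_one]
  have hdecomp : fromBlocks Am Bm Cm Dm = L * (G * U) := by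
    rw [hL, hG, hU, fromBlocks_multiply, fromBlocks_multiply]
    simp only [Matrix.one_mul, Matrix.mul_one, Matrix.zero_mul, Matrix.mul_zero, add_zero,
      zero_add, e1, e2]
    exact congrArg (fromBlocks Am Bm Cm) (by rw [hS]; abel)
  have hGeq : G = Li * fromBlocks Am Bm Cm Dm * Ui := by
    rw [hdecomp, ← Matrix.mul_assoc, ← Matrix.mul_assoc, hLiL, Matrix.one_mul,
      Matrix.mul_assoc, hUUi, Matrix.mul_one]
  have hGunit : IsUnit G := by
    rw [hGeq]
    have hLiu : IsUnit Li := ⟨⟨Li, L, hLiL, hLLi⟩, rfl⟩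
    have hUiu : IsUnit Ui := ⟨⟨Ui, U, hUiU, hUUi⟩, rfl⟩
    exact IsUnit.mul (IsUnit.mul hLiu hX) hUiu
  obtain ⟨z, hz⟩ := hGunit
  have h1 : G * Units.val z⁻¹ = 1 := by rw [← hz]; exact z.mul_inv
  have h2 : Units.val z⁻¹ * G = 1 := by rw [← hz]; exact z.inv_mul
  rw [← fromBlocks_toBlocks (Units.val z⁻¹)] at h1 h2
  rw [hG] at h1 h2
  rw [fromBlocks_multiply, ← fromBlocks_one] at h1 h2
  have h1' := congrArg Matrix.toBlocks₂₂ h1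
  have h2' := congrArg Matrix.toBlocks₂₂ h2
  simp only [toBlocks_fromBlocks₂₂, Matrix.zero_mul, Matrix.mul_zero, zero_add, add_zero]
    at h1' h2'
  have hSunit : IsUnit S := ⟨⟨S, _, h1', h2'⟩, rfl⟩
  refine ⟨hSunit, ?_⟩
  have hGinv : fromBlocks A' 0 0 (Ring.inverse S) * G = 1 := by
    rw [hG, fromBlocks_multiply, ← fromBlocks_one]
    simp [hA'A, Ring.inverse_mul_cancel _ hSunit]
  have key : (Ui * (fromBlocks A' 0 0 (Ring.inverse S) * Li)) * fromBlocks Am Bm Cm Dm = 1 := by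
    rw [hdecomp]
    have c1 : Li * (L * (G * U)) = G * U := by rw [← Matrix.mul_assoc, hLiL, Matrix.one_mul]
    calc (Ui * (fromBlocks A' 0 0 (Ring.inverse S) * Li)) * (L * (G * U))
        = Ui * (fromBlocks A' 0 0 (Ring.inverse S) * (Li * (L * (G * U)))) := by
          simp only [Matrix.mul_assoc]
      _ = Ui * (fromBlocks A' 0 0 (Ring.inverse S) * (G * U)) := by rw [c1]
      _ = Ui * ((fromBlocks A' 0 0 (Ring.inverse S) * G) * U) := by rw [Matrix.mul_assoc]
      _ = Ui * U := by rw [hGinv, Matrix.one_mul]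
      _ = 1 := hUiU
  have hXinv : Ring.inverse (fromBlocks Am Bm Cm Dm)
      = Ui * (fromBlocks A' 0 0 (Ring.inverse S) * Li) := by
    have hc := Ring.mul_inverse_cancel _ hX
    calc Ring.inverse (fromBlocks Am Bm Cm Dm)
        = 1 * Ring.inverse (fromBlocks Am Bm Cm Dm) := (Matrix.one_mul _).symm
      _ = (Ui * (fromBlocks A' 0 0 (Ring.inverse S) * Li)) * (fromBlocks Am Bm Cm Dm
            * Ring.inverse (fromBlocks Am Bm Cm Dm)) := by
          rw [← key, Matrix.mul_assoc]
      _ = _ := by rw [hc, Matrix.mul_one]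
  rw [hXinv, hUi, hLi, fromBlocks_multiply, fromBlocks_multiply]
  simp [toBlocks_fromBlocks₂₂]

end Core

section YangianLemmas

theorem constCoeff_t {m n : ℕ} (i j : Fin (m+n)) :
    PowerSeries.constantCoeff (t (m := m) (n := n) i j) = if i = j then 1 else 0 := by
  simp [t]

theorem t_congr {m n : ℕ} {i j i' j' : Fin (m+n)} (h1 : (i : ℕ) = (i' : ℕ))
    (h2 : (j : ℕ) = (j' : ℕ)) : t i j = t i' j' := by
  obtain rfl : i = i' := Fin.ext h1
  obtain rfl : j = j' := Fin.ext h2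
  rfl

theorem isUnit_T (m n : ℕ) : IsUnit (T m n) := by
  apply matrix_isUnit
  intro a b
  simp [T, constCoeff_t, Matrix.one_apply]

theorem isUnit_subT (m n : ℕ) (j : Fin (m+n)) : IsUnit (subT m n j) := by
  apply matrix_isUnit
  intro a b
  simp [subT, constCoeff_t, Matrix.one_apply, Fin.castLE_inj]

/-- The top-left `p × p` corner of `T(u)`. -/
def Amat (m n p : ℕ) (hp : p ≤ m + n) : Matrix (Fin p) (Fin p) (PowerSeries (Yangian m n)) :=
  Matrix.of fun c d => t ⟨(c : ℕ), lt_of_lt_of_le c.isLt hp⟩ ⟨(d : ℕ), lt_of_lt_of_le d.isLt hp⟩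

theorem isUnit_Amat (m n p : ℕ) (hp : p ≤ m + n) : IsUnit (Amat m n p hp) := by
  apply matrix_isUnit
  intro a b
  simp [Amat, constCoeff_t, Matrix.one_apply, Fin.ext_iff]

/-- The Schur-complement scalar whose value is the quasideterminant `dQ m n j`. -/
def schur (m n : ℕ) (j : Fin (m+n)) : PowerSeries (Yangian m n) :=
  t j j - ∑ c : Fin (j : ℕ), ∑ d : Fin (j : ℕ),
    t j ⟨(c : ℕ), lt_trans c.isLt j.isLt⟩
      * Ring.inverse (Amat m n (j : ℕ) (le_of_lt j.isLt)) c d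
      * t ⟨(d : ℕ), lt_trans d.isLt j.isLt⟩ j

theorem keyA (m n : ℕ) (j : Fin (m+n)) :
    IsUnit (schur m n j)
      ∧ Ring.inverse (subT m n j) (Fin.last (j : ℕ)) (Fin.last (j : ℕ))
          = Ring.inverse (schur m n j) := by
  set p := (j : ℕ) with hp
  set e1 : Fin p ⊕ Fin 1 ≃ Fin (p+1) := finSumFinEquiv with he1
  set A1 := Amat m n p (le_of_lt j.isLt) with hA1
  set B1 : Matrix (Fin p) (Fin 1) (PowerSeries (Yangian m n)) :=
    Matrix.of fun c _ => t ⟨(c : ℕ), lt_trans c.isLt j.isLt⟩ j with hB1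
  set C1 : Matrix (Fin 1) (Fin p) (PowerSeries (Yangian m n)) :=
    Matrix.of fun _ c => t j ⟨(c : ℕ), lt_trans c.isLt j.isLt⟩ with hC1
  set D1 : Matrix (Fin 1) (Fin 1) (PowerSeries (Yangian m n)) :=
    Matrix.of fun _ _ => t j j with hD1
  have hXb : (subT m n j).submatrix e1 e1 = fromBlocks A1 B1 C1 D1 := by
    refine Matrix.ext fun x y => ?_
    cases x with
    | inl c =>
      cases y with
      | inl d =>
        simp only [Matrix.submatrix_apply, he1, finSumFinEquiv_apply_left, subT, Matrix.of_apply,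
          fromBlocks_apply₁₁, hA1, Amat]
        apply t_congr <;> simp [hp]
      | inr d =>
        simp only [Matrix.submatrix_apply, he1, finSumFinEquiv_apply_left,
          finSumFinEquiv_apply_right, subT, Matrix.of_apply, fromBlocks_apply₁₂, hB1]
        apply t_congr <;> simp [hp]
    | inr c =>
      cases y with
      | inl d =>
        simp only [Matrix.submatrix_apply, he1, finSumFinEquiv_apply_left,
          finSumFinEquiv_apply_right, subT, Matrix.of_apply, fromBlocks_apply₂₁, hC1]
        apply t_congr <;> simp [hp]
      | inr d =>
        simp only [Matrix.submatrix_apply, he1, finSumFinEquiv_apply_right, subT, Matrix.of_apply,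
          fromBlocks_apply₂₂, hD1]
        apply t_congr <;> simp [hp]
  have hsub_unit : IsUnit (fromBlocks A1 B1 C1 D1) := by
    rw [← hXb]
    exact isUnit_submatrix e1 _ (isUnit_subT m n j)
  obtain ⟨hSu, hBlocks⟩ := core A1 B1 C1 D1 hsub_unit (isUnit_Amat m n p _)
  have hscal : (one1 (PowerSeries (Yangian m n))) (D1 - C1 * Ring.inverse A1 * B1)
      = schur m n j := by
    show (D1 - C1 * Ring.inverse A1 * B1) 0 0 = schur m n j
    rw [Matrix.sub_apply, mul3_apply]
    rfl
  have hunit : IsUnit (schur m n j) := by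
    rw [← hscal]
    exact hSu.map _
  refine ⟨hunit, ?_⟩
  have hinv : Ring.inverse ((subT m n j).submatrix e1 e1)
      = (Ring.inverse (subT m n j)).submatrix e1 e1 := submatrix_ringInverse e1 _
  have hlast : e1 (Sum.inr 0) = Fin.last p := by
    apply Fin.ext
    simp [he1]
  calc Ring.inverse (subT m n j) (Fin.last p) (Fin.last p)
      = (Ring.inverse (subT m n j)).submatrix e1 e1 (Sum.inr 0) (Sum.inr 0) := by
        rw [Matrix.submatrix_apply, hlast]
    _ = Ring.inverse (fromBlocks A1 B1 C1 D1) (Sum.inr 0) (Sum.inr 0) := by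
        rw [← hinv, hXb]
    _ = (Ring.inverse (fromBlocks A1 B1 C1 D1)).toBlocks₂₂ 0 0 := rfl
    _ = Ring.inverse (D1 - C1 * Ring.inverse A1 * B1) 0 0 := by rw [hBlocks]
    _ = Ring.inverse (schur m n j) := by
        rw [← hscal]
        exact re_inverse (one1 (PowerSeries (Yangian m n))) _

theorem dQ_eq_schur (m n : ℕ) (j : Fin (m+n)) : dQ m n j = schur m n j := by
  obtain ⟨hu, hinv⟩ := keyA m n j
  rw [dQ, hinv, ring_inv_inv hu]

theorem keyB (m n k q : ℕ) (hk : k + q = m + n) (hq : 0 < q)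
    (hbL : ∀ a : Fin q, k + (a : ℕ) < m + n) (hkL : k < m + n)
    (CM : Matrix (Fin q) (Fin q) (PowerSeries (Yangian m n)))
    (hCM : ∀ a b : Fin q, CM a b = Ring.inverse (T m n) ⟨k + (a : ℕ), hbL a⟩ ⟨k + (b : ℕ), hbL b⟩) :
    IsUnit CM ∧ Ring.inverse CM ⟨0, hq⟩ ⟨0, hq⟩ = schur m n ⟨k, hkL⟩ := by
  set e : Fin k ⊕ Fin q ≃ Fin (m+n) := finSumFinEquiv.trans (finCongr hk) with he
  have heL : ∀ c : Fin k, ((e (Sum.inl c) : Fin (m+n)) : ℕ) = (c : ℕ) := by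
    intro c; simp [he]
  have heR : ∀ a : Fin q, ((e (Sum.inr a) : Fin (m+n)) : ℕ) = k + (a : ℕ) := by
    intro a; simp [he]
  set A0 := Amat m n k (le_of_lt hkL) with hA0
  set B0 : Matrix (Fin k) (Fin q) (PowerSeries (Yangian m n)) :=
    Matrix.of fun c b => t ⟨(c : ℕ), lt_trans c.isLt hkL⟩ ⟨k + (b : ℕ), hbL b⟩ with hB0
  set C0 : Matrix (Fin q) (Fin k) (PowerSeries (Yangian m n)) :=
    Matrix.of fun a c => t ⟨k + (a : ℕ), hbL a⟩ ⟨(c : ℕ), lt_trans c.isLt hkL⟩ with hC0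
  set D0 : Matrix (Fin q) (Fin q) (PowerSeries (Yangian m n)) :=
    Matrix.of fun a b => t ⟨k + (a : ℕ), hbL a⟩ ⟨k + (b : ℕ), hbL b⟩ with hD0
  have hXb : (T m n).submatrix e e = fromBlocks A0 B0 C0 D0 := by
    refine Matrix.ext fun x y => ?_
    cases x with
    | inl c =>
      cases y with
      | inl d =>
        simp only [Matrix.submatrix_apply, T, Matrix.of_apply, fromBlocks_apply₁₁, hA0, Amat]
        apply t_congr <;> simp [heL, heR]
      | inr d =>
        simp only [Matrix.submatrix_apply, T, Matrix.of_apply, fromBlocks_apply₁₂, hB0]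
        apply t_congr <;> simp [heL, heR]
    | inr c =>
      cases y with
      | inl d =>
        simp only [Matrix.submatrix_apply, T, Matrix.of_apply, fromBlocks_apply₂₁, hC0]
        apply t_congr <;> simp [heL, heR]
      | inr d =>
        simp only [Matrix.submatrix_apply, T, Matrix.of_apply, fromBlocks_apply₂₂, hD0]
        apply t_congr <;> simp [heL, heR]
  have hsub_unit : IsUnit (fromBlocks A0 B0 C0 D0) := by
    rw [← hXb]
    exact isUnit_submatrix e _ (isUnit_T m n)
  obtain ⟨hSu, hBlocks⟩ := core A0 B0 C0 D0 hsub_unit (isUnit_Amat m n k _)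
  have hinv : Ring.inverse ((T m n).submatrix e e)
      = (Ring.inverse (T m n)).submatrix e e := submatrix_ringInverse e _
  have hCMeq : CM = Ring.inverse (D0 - C0 * Ring.inverse A0 * B0) := by
    refine Matrix.ext fun a b => ?_
    rw [hCM a b]
    have ha : (⟨k + (a : ℕ), hbL a⟩ : Fin (m+n)) = e (Sum.inr a) := Fin.ext (by simp [heR])
    have hb : (⟨k + (b : ℕ), hbL b⟩ : Fin (m+n)) = e (Sum.inr b) := Fin.ext (by simp [heR])
    rw [ha, hb]
    have h2 : Ring.inverse (T m n) (e (Sum.inr a)) (e (Sum.inr b))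
        = ((Ring.inverse (T m n)).submatrix e e) (Sum.inr a) (Sum.inr b) := rfl
    rw [h2, ← hinv, hXb]
    show (Ring.inverse (fromBlocks A0 B0 C0 D0)).toBlocks₂₂ a b = _
    rw [hBlocks]
  have hCMunit : IsUnit CM := by
    rw [hCMeq]
    exact isUnit_ringInverse hSu
  refine ⟨hCMunit, ?_⟩
  rw [hCMeq, ring_inv_inv hSu]
  rw [Matrix.sub_apply, mul3_apply]
  rfl

end YangianLemmas

section StepA

/-- `flipIdx` as an equivalence. -/
def flipEquiv (m n : ℕ) : Fin (m+n) ≃ Fin (n+m) where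
  toFun := flipIdx
  invFun := flipIdx
  left_inv i := by
    apply Fin.ext
    have := i.isLt
    simp only [flipIdx]
    omega
  right_inv i := by
    apply Fin.ext
    have := i.isLt
    simp only [flipIdx]
    omega

theorem stepA (m n : ℕ) (ω : Yangian n m →ₐ[ℂ] Yangian n m) (hω : omegaProp n m ω)
    (ρ : Yangian n m →ₐ[ℂ] Yangian m n) (hρ : rhoProp n m ρ) (a b : Fin (n+m)) :
    PowerSeries.map (ρ.comp ω).toRingHom (t a b) = t' (flipIdx a) (flipIdx b) := by
  have hTnm := isUnit_T n m
  have hTmn := isUnit_T m n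
  have hcomp : PowerSeries.map (ρ.comp ω).toRingHom (t a b)
      = PowerSeries.map ρ.toRingHom (PowerSeries.map ω.toRingHom (t a b)) := by
    ext p
    simp only [PowerSeries.coeff_map]
    rfl
  rw [hcomp, hω a b, negu_map]
  set Φ : Matrix (Fin (n+m)) (Fin (n+m)) (PowerSeries (Yangian n m))
      →+* Matrix (Fin (n+m)) (Fin (n+m)) (PowerSeries (Yangian m n)) :=
    (PowerSeries.map ρ.toRingHom).mapMatrix with hΦ
  have h1 : PowerSeries.map ρ.toRingHom (t' a b) = (Φ (Ring.inverse (T n m))) a b := rfl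
  have h2 : Φ (Ring.inverse (T n m)) = Ring.inverse (Φ (T n m)) := rh_inverse Φ hTnm
  have h3 : Φ (T n m) = (Matrix.reindexAlgEquiv ℕ (PowerSeries (Yangian m n)) (flipEquiv m n))
      ((neguRH (Yangian m n)).mapMatrix (T m n)) := by
    refine Matrix.ext fun x y => ?_
    simp only [hΦ, RingHom.mapMatrix_apply, Matrix.map_apply, Matrix.reindexAlgEquiv_apply,
      Matrix.reindex_apply, Matrix.submatrix_apply, T, Matrix.of_apply]
    rw [hρ x y]
    rfl
  have h4 : Ring.inverse (Φ (T n m))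
      = (Matrix.reindexAlgEquiv ℕ (PowerSeries (Yangian m n)) (flipEquiv m n))
          ((neguRH (Yangian m n)).mapMatrix (Ring.inverse (T m n))) := by
    rw [h3, rh_inverse ((neguRH (Yangian m n)).mapMatrix) hTmn]
    exact (re_inverse (Matrix.reindexAlgEquiv ℕ (PowerSeries (Yangian m n))
      (flipEquiv m n)).toRingEquiv _).symm
  calc negu (PowerSeries.map ρ.toRingHom (t' a b))
      = negu ((Ring.inverse (Φ (T n m))) a b) := by rw [h1, h2]
    _ = negu (negu ((Ring.inverse (T m n)) (flipIdx a) (flipIdx b))) := by rw [h4]; rfl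
    _ = t' (flipIdx a) (flipIdx b) := negu_negu _

end StepA


end SuperYangian
namespace SuperYangian

/-- For `1 ≤ i ≤ m+n`, the isomorphism
`ρ_{n|m} ∘ ω_{n|m} : Y(gl_{n|m}) → Y(gl_{m|n})` maps the quasideterminant `d_i(v)` of
`Y(gl_{n|m})` to the inverse of the quasideterminant `d_{m+n+1-i}(v)` of `Y(gl_{m|n})`
(`1`-based labels; `dQ` is `0`-indexed). -/
theorem rho_omega_maps_dQ (m n : ℕ) (h : 1 ≤ m + n)
    (ω : Yangian n m →ₐ[ℂ] Yangian n m) (hω : omegaProp n m ω)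
    (ρ : Yangian n m →ₐ[ℂ] Yangian m n) (hρ : rhoProp n m ρ)
    (i : ℕ) (hi1 : 1 ≤ i) (hi2 : i ≤ m + n) :
    PowerSeries.map (ρ.comp ω).toRingHom (dQ n m ⟨i-1, by omega⟩)
      = Ring.inverse (dQ m n ⟨m+n-i, by omega⟩) := by
  have hjs : i - 1 < n + m := by omega
  have hkL : m + n - i < m + n := by omega
  have hbL : ∀ a : Fin (i-1+1), (m+n-i) + (a : ℕ) < m + n := by
    intro a; have := a.isLt; omega
  obtain ⟨hsU, hsInv⟩ := keyA n m ⟨i-1, hjs⟩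
  have hx : IsUnit (Ring.inverse (subT n m ⟨i-1, hjs⟩)
      (Fin.last (i-1)) (Fin.last (i-1))) := by
    rw [hsInv]; exact isUnit_ringInverse hsU
  set CM : Matrix (Fin (i-1+1)) (Fin (i-1+1)) (PowerSeries (Yangian m n)) :=
    Matrix.of fun a b =>
      Ring.inverse (T m n) ⟨(m+n-i) + (a : ℕ), hbL a⟩ ⟨(m+n-i) + (b : ℕ), hbL b⟩ with hCMdef
  obtain ⟨hCu, hC0⟩ := keyB m n (m+n-i) (i-1+1) (by omega) (Nat.succ_pos _) hbL hkL CM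
    (fun a b => rfl)
  set rev : Fin (i-1+1) ≃ Fin (i-1+1) :=
    ⟨fun a => ⟨i-1-(a : ℕ), by omega⟩, fun a => ⟨i-1-(a : ℕ), by omega⟩,
     fun a => Fin.ext (by have := a.isLt; simp only; omega),
     fun a => Fin.ext (by have := a.isLt; simp only; omega)⟩ with hrev
  have hM : (PowerSeries.map (ρ.comp ω).toRingHom).mapMatrix (subT n m ⟨i-1, hjs⟩)
      = CM.submatrix rev rev := by
    refine Matrix.ext fun a b => ?_
    simp only [RingHom.mapMatrix_apply, Matrix.map_apply, subT, Matrix.of_apply,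
      Matrix.submatrix_apply, hCMdef]
    rw [stepA m n ω hω ρ hρ]
    show Ring.inverse (T m n) _ _ = _
    have hfa : flipIdx (Fin.castLE hjs a) = (⟨(m+n-i) + ((rev a : Fin (i-1+1)) : ℕ),
        hbL (rev a)⟩ : Fin (m+n)) := by
      apply Fin.ext
      have ha : (a : ℕ) < i - 1 + 1 := a.isLt
      show n + m - 1 - (a : ℕ) = (m+n-i) + (i - 1 - (a : ℕ))
      omega
    have hfb : flipIdx (Fin.castLE hjs b) = (⟨(m+n-i) + ((rev b : Fin (i-1+1)) : ℕ),
        hbL (rev b)⟩ : Fin (m+n)) := by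
      apply Fin.ext
      have hb : (b : ℕ) < i - 1 + 1 := b.isLt
      show n + m - 1 - (b : ℕ) = (m+n-i) + (i - 1 - (b : ℕ))
      omega
    rw [hfa, hfb]
  have hrl : rev (Fin.last (i-1)) = (⟨0, Nat.succ_pos _⟩ : Fin (i-1+1)) := by
    apply Fin.ext
    show i - 1 - (i - 1) = 0
    omega
  have hxmap : PowerSeries.map (ρ.comp ω).toRingHom
        (Ring.inverse (subT n m ⟨i-1, hjs⟩) (Fin.last (i-1)) (Fin.last (i-1)))
      = schur m n ⟨m+n-i, hkL⟩ := by
    have e1 : PowerSeries.map (ρ.comp ω).toRingHom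
          (Ring.inverse (subT n m ⟨i-1, hjs⟩) (Fin.last (i-1)) (Fin.last (i-1)))
        = ((PowerSeries.map (ρ.comp ω).toRingHom).mapMatrix
            (Ring.inverse (subT n m ⟨i-1, hjs⟩))) (Fin.last (i-1)) (Fin.last (i-1)) := rfl
    rw [e1, rh_inverse ((PowerSeries.map (ρ.comp ω).toRingHom).mapMatrix)
      (isUnit_subT n m ⟨i-1, hjs⟩), hM, submatrix_ringInverse rev CM,
      Matrix.submatrix_apply, hrl, hC0]
  calc PowerSeries.map (ρ.comp ω).toRingHom (dQ n m ⟨i-1, by omega⟩)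
      = PowerSeries.map (ρ.comp ω).toRingHom
          (Ring.inverse (Ring.inverse (subT n m ⟨i-1, hjs⟩)
            (Fin.last (i-1)) (Fin.last (i-1)))) := rfl
    _ = Ring.inverse (PowerSeries.map (ρ.comp ω).toRingHom
          (Ring.inverse (subT n m ⟨i-1, hjs⟩) (Fin.last (i-1)) (Fin.last (i-1)))) :=
        rh_inverse _ hx
    _ = Ring.inverse (schur m n ⟨m+n-i, hkL⟩) := by rw [hxmap]
    _ = Ring.inverse (dQ m n ⟨m+n-i, by omega⟩) := by rw [dQ_eq_schur]

end SuperYangian
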